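/- (Dixon's summation theorem) For all nonnegative integers a₁, a₂, a₃, one has Υ₃(a₁, a₂, a₃) = Σ_{k ∈ ℤ} (−1)^k C(2a₁, a₁+k) C(2a₂, a₂+k) C(2a₃, a₃+k) = ((2a₁)!(2a₂)!(2a₃)!(a₁+a₂+a₃)!)/((a₁+a₂)!(a₁+a₃)!(a₂+a₃)!·a₁!·a₂!·a₃!). -/

import Mathlib

/-- Binomial coefficient `C(n, j)` for `n : ℕ` and `j : ℤ`, with the convention that
it is zero unless `0 ≤ j ≤ n`, as a rational number. -/
def ichoose (n : ℕ) (j : ℤ) : ℚ := if 0 ≤ j then (n.choose j.toNat : ℚ) else 0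

/-- `Υ_{m+1}(a₀, …, a_m) = Σ_{k ∈ ℤ} (−1)^k ∏ᵢ C(2aᵢ, aᵢ + k)`.  Only integers `k`
with `|k| ≤ a₀` can contribute (the factor `i = 0` vanishes otherwise), so the sum
over all of `ℤ` equals the finite sum over `|k| ≤ a₀`. -/
noncomputable def ups {m : ℕ} (a : Fin (m + 1) → ℕ) : ℚ :=
  ∑ k ∈ Finset.Icc (-(a 0 : ℤ)) (a 0 : ℤ),
    (-1 : ℚ) ^ k * ∏ i, ichoose (2 * a i) ((a i : ℤ) + k)

lemma ichoose_neg (n : ℕ) {j : ℤ} (h : j < 0) : ichoose n j = 0 := by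
  simp [ichoose, not_le.mpr h]

lemma ichoose_gt (n : ℕ) {j : ℤ} (h : (n : ℤ) < j) : ichoose n j = 0 := by
  have h0 : 0 ≤ j := le_of_lt (lt_of_le_of_lt (Int.ofNat_nonneg n) h)
  have : n < j.toNat := by omega
  simp [ichoose, h0, Nat.choose_eq_zero_of_lt this]

lemma ichoose_nonneg (n : ℕ) {j : ℤ} (h : 0 ≤ j) : ichoose n j = (n.choose j.toNat : ℚ) := by
  simp [ichoose, h]

-- L1 : (j+1) C(n, j+1) = (n - j) C(n, j)
lemma L1 (n : ℕ) (j : ℤ) : ((j:ℚ)+1) * ichoose n (j+1) = ((n:ℚ) - (j:ℚ)) * ichoose n j := by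
  rcases lt_trichotomy j (-1) with h | h | h
  · rw [ichoose_neg n (by omega), ichoose_neg n (by omega)]; ring
  · subst h; simp [ichoose_neg n (by norm_num : (-1:ℤ) < 0)]
  · have h0 : 0 ≤ j := by omega
    have h1 : (0:ℤ) ≤ j + 1 := by omega
    rw [ichoose_nonneg n h0, ichoose_nonneg n h1]
    set m := j.toNat with hm
    have hj : (j:ℤ) = m := by omega
    have hj1 : (j+1).toNat = m + 1 := by omega
    rw [hj1]
    rcases le_or_gt m n with hle | hlt
    · have := Nat.choose_succ_right_eq n m
      have := congrArg (fun x : ℕ => (x : ℚ)) this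
      push_cast [Nat.cast_sub hle] at this
      have hjq : (j:ℚ) = m := by exact_mod_cast hj
      rw [hjq]; linarith [this]
    · rw [Nat.choose_eq_zero_of_lt hlt, Nat.choose_eq_zero_of_lt (by omega)]
      simp

-- L3 : j * C(n+1, j) = (n+1) * C(n, j-1)
lemma L3 (n : ℕ) (j : ℤ) : (j:ℚ) * ichoose (n+1) j = ((n:ℚ)+1) * ichoose n (j-1) := by
  rcases lt_trichotomy j 0 with h | h | h
  · rw [ichoose_neg _ h, ichoose_neg n (by omega)]; ring
  · subst h; simp [ichoose_neg n (by norm_num : (-1:ℤ) < 0)]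
  · have h0 : 0 ≤ j := le_of_lt h
    rw [ichoose_nonneg _ h0, ichoose_nonneg n (by omega)]
    set m := (j-1).toNat with hm
    have hj : j.toNat = m + 1 := by omega
    rw [hj]
    have := Nat.add_one_mul_choose_eq n m
    have := congrArg (fun x : ℕ => (x : ℚ)) this
    push_cast at this
    have hjq : (j:ℚ) = (m:ℚ) + 1 := by
      have : (j:ℤ) = (m:ℤ) + 1 := by omega
      exact_mod_cast this
    rw [hjq]; linarith [this]

-- Pascal
lemma pascal (n : ℕ) (j : ℤ) : ichoose (n+1) j = ichoose n j + ichoose n (j-1) := by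
  rcases lt_trichotomy j 0 with h | h | h
  · rw [ichoose_neg _ h, ichoose_neg n h, ichoose_neg n (by omega)]; ring
  · subst h; simp [ichoose, ichoose_neg n (by norm_num : (-1:ℤ) < 0)]
  · have h0 : 0 ≤ j := le_of_lt h
    rw [ichoose_nonneg _ h0, ichoose_nonneg n h0, ichoose_nonneg n (by omega)]
    set m := (j-1).toNat with hm
    have hj : j.toNat = m + 1 := by omega
    rw [hj]
    rw [Nat.choose_succ_succ]
    push_cast
    ring

-- L2 : (n+1-j) * C(n+1, j) = (n+1) * C(n, j)
lemma L2 (n : ℕ) (j : ℤ) : ((n:ℚ)+1-(j:ℚ)) * ichoose (n+1) j = ((n:ℚ)+1) * ichoose n j := by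
  have hp := pascal n j
  have h3 := L3 n j
  rw [hp] at h3 ⊢
  linear_combination -h3

noncomputable def T (a b c : ℕ) (k : ℤ) : ℚ :=
  (-1 : ℚ) ^ k * (ichoose (2*a) ((a:ℤ)+k) * ichoose (2*b) ((b:ℤ)+k) * ichoose (2*c) ((c:ℤ)+k))

lemma T_zero (a b c : ℕ) {k : ℤ} (h : (a:ℤ) < k ∨ k < -(a:ℤ)) : T a b c k = 0 := by
  have : ichoose (2*a) ((a:ℤ)+k) = 0 := by
    rcases h with h | h
    · exact ichoose_gt _ (by push_cast; omega)
    · exact ichoose_neg _ (by omega)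
  simp [T, this]

-- absorption: ((a+1)+k)((a+1)-k) C(2a+2, a+1+k) = (2a+2)(2a+1) C(2a, a+k)
lemma absorb (a : ℕ) (k : ℤ) :
    (((a:ℚ)+1+k) * ((a:ℚ)+1-k)) * ichoose (2*(a+1)) ((a:ℤ)+1+k)
      = (2*(a:ℚ)+2) * (2*(a:ℚ)+1) * ichoose (2*a) ((a:ℤ)+k) := by
  have h2 : ichoose (2*(a+1)) ((a:ℤ)+1+k) = ichoose ((2*a+1)+1) ((a:ℤ)+1+k) := by
    ring_nf
  have e1 := L2 (2*a+1) ((a:ℤ)+1+k)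
  have e2 := L3 (2*a) ((a:ℤ)+1+k)
  have hs : ((a:ℤ)+1+k) - 1 = (a:ℤ)+k := by ring
  rw [hs] at e2
  rw [h2]
  push_cast at e1 e2 ⊢
  linear_combination ((a:ℚ)+1+k) * e1 + (2*(a:ℚ)+2) * e2

lemma tel (f : ℤ → ℚ) (m : ℤ) (n : ℕ) :
    ∑ k ∈ Finset.Icc m (m + (n:ℤ)), (f (k+1) - f k) = f (m + n + 1) - f m := by
  induction n with
  | zero => simp
  | succ n ih =>
    have hset : Finset.Icc m (m + ((n:ℤ)+1)) = insert (m + (n:ℤ) + 1) (Finset.Icc m (m + (n:ℤ))) := by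
      ext x; simp only [Finset.mem_Icc, Finset.mem_insert]; omega
    push_cast
    rw [hset, Finset.sum_insert (by simp only [Finset.mem_Icc]; omega)]
    push_cast at ih
    rw [ih]; ring_nf

lemma moment (a b c N : ℕ) (hN : a ≤ N) :
    ∑ k ∈ Finset.Icc (-(N:ℤ)) (N:ℤ),
      (((a:ℚ)*(b:ℚ)*(c:ℚ) + ((a:ℚ)+(b:ℚ)+(c:ℚ)) * (k:ℚ)^2) * T a b c k) = 0 := by
  set g : ℤ → ℚ := fun k => (-1:ℚ)^k * (((a:ℚ)+(k:ℚ)) * ((b:ℚ)+(k:ℚ)) * ((c:ℚ)+(k:ℚ)))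
    * (ichoose (2*a) ((a:ℤ)+k) * ichoose (2*b) ((b:ℤ)+k) * ichoose (2*c) ((c:ℤ)+k)) with hg
  have point : ∀ k : ℤ, g (k+1) - g k
      = (-2) * ((((a:ℚ)*(b:ℚ)*(c:ℚ) + ((a:ℚ)+(b:ℚ)+(c:ℚ)) * (k:ℚ)^2) * T a b c k)) := by
    intro k
    have l1 := L1 (2*a) ((a:ℤ)+k)
    have l2 := L1 (2*b) ((b:ℤ)+k)
    have l3 := L1 (2*c) ((c:ℤ)+k)
    have ea : (a:ℤ)+(k+1) = ((a:ℤ)+k)+1 := by ring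
    have eb : (b:ℤ)+(k+1) = ((b:ℤ)+k)+1 := by ring
    have ec : (c:ℤ)+(k+1) = ((c:ℤ)+k)+1 := by ring
    have epow : (-1:ℚ)^(k+1) = -((-1:ℚ)^k) := by
      rw [zpow_add_one₀ (by norm_num : (-1:ℚ) ≠ 0)]; ring
    simp only [hg, T, ea, eb, ec, epow]
    push_cast at l1 l2 l3 ⊢
    set s := (-1:ℚ)^k
    set X := ichoose (2*a) ((a:ℤ)+k)
    set X' := ichoose (2*a) (((a:ℤ)+k)+1)
    set Y := ichoose (2*b) ((b:ℤ)+k)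
    set Y' := ichoose (2*b) (((b:ℤ)+k)+1)
    set Z := ichoose (2*c) ((c:ℤ)+k)
    set Z' := ichoose (2*c) (((c:ℤ)+k)+1)
    linear_combination
      (-s) * (((b:ℚ)+k+1)*((c:ℚ)+k+1)*Y'*Z') * l1
      + (-s) * (((a:ℚ)-k)*X*((c:ℚ)+k+1)*Z') * l2
      + (-s) * (((a:ℚ)-k)*((b:ℚ)-k)*X*Y) * l3
  have htel := tel g (-(N:ℤ)-1) (2*N+1)
  have harg : (-(N:ℤ)-1) + ((2*N+1 : ℕ):ℤ) = (N:ℤ) := by push_cast; ring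
  rw [harg] at htel
  have hgN : g ((N:ℤ) + 1) = 0 := by
    have : ichoose (2*a) ((a:ℤ)+((N:ℤ)+1)) = 0 := ichoose_gt _ (by push_cast; omega)
    simp [hg, this]
  have hgM : g (-(N:ℤ)-1) = 0 := by
    have : ichoose (2*a) ((a:ℤ)+(-(N:ℤ)-1)) = 0 := ichoose_neg _ (by omega)
    simp [hg, this]
  rw [hgN, hgM, sub_zero] at htel
  have hsplit : ∑ k ∈ Finset.Icc (-(N:ℤ)-1) (N:ℤ), (g (k+1) - g k)
      = ∑ k ∈ Finset.Icc (-(N:ℤ)-1) (N:ℤ),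
          (-2) * ((((a:ℚ)*(b:ℚ)*(c:ℚ) + ((a:ℚ)+(b:ℚ)+(c:ℚ)) * (k:ℚ)^2) * T a b c k)) :=
    Finset.sum_congr rfl (fun k _ => point k)
  have hsub : ∑ k ∈ Finset.Icc (-(N:ℤ)) (N:ℤ),
        (-2) * ((((a:ℚ)*(b:ℚ)*(c:ℚ) + ((a:ℚ)+(b:ℚ)+(c:ℚ)) * (k:ℚ)^2) * T a b c k))
      = ∑ k ∈ Finset.Icc (-(N:ℤ)-1) (N:ℤ),
        (-2) * ((((a:ℚ)*(b:ℚ)*(c:ℚ) + ((a:ℚ)+(b:ℚ)+(c:ℚ)) * (k:ℚ)^2) * T a b c k)) := by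
    apply Finset.sum_subset
    · apply Finset.Icc_subset_Icc (by omega) le_rfl
    · intro x hx hx2
      simp only [Finset.mem_Icc] at hx hx2
      have hxv : x < -(a:ℤ) := by omega
      rw [T_zero a b c (Or.inr hxv)]
      ring
  have h0 : ∑ k ∈ Finset.Icc (-(N:ℤ)) (N:ℤ),
        (-2) * ((((a:ℚ)*(b:ℚ)*(c:ℚ) + ((a:ℚ)+(b:ℚ)+(c:ℚ)) * (k:ℚ)^2) * T a b c k)) = 0 := by
    rw [hsub, ← hsplit, htel]
  rw [← Finset.mul_sum] at h0
  have := mul_eq_zero.mp h0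
  rcases this with h | h
  · norm_num at h
  · exact h

noncomputable def S (a b c : ℕ) : ℚ := ∑ k ∈ Finset.Icc (-(a:ℤ)) (a:ℤ), T a b c k

lemma S_ext (a b c N : ℕ) (h : a ≤ N) :
    ∑ k ∈ Finset.Icc (-(N:ℤ)) (N:ℤ), T a b c k = S a b c := by
  rw [S]
  apply (Finset.sum_subset (Finset.Icc_subset_Icc (by omega) (by omega)) _).symm
  intro x hx hx2
  simp only [Finset.mem_Icc] at hx hx2
  exact T_zero a b c (by omega)

lemma S_rec (a b c : ℕ) :
    ((a:ℚ)+1) * ((a:ℚ)+(b:ℚ)+1) * ((a:ℚ)+(c:ℚ)+1) * S (a+1) b c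
      = (2*(a:ℚ)+2) * (2*(a:ℚ)+1) * ((a:ℚ)+(b:ℚ)+(c:ℚ)+1) * S a b c := by
  set E := Finset.Icc (-((a:ℤ)+1)) ((a:ℤ)+1) with hE
  have hE' : E = Finset.Icc (-(((a+1):ℕ):ℤ)) (((a+1):ℕ):ℤ) := by rw [hE]; push_cast; ring_nf
  set P := ∑ k ∈ E, T (a+1) b c k with hP
  set Q := ∑ k ∈ E, (k:ℚ)^2 * T (a+1) b c k with hQ
  have hPS : P = S (a+1) b c := by rw [hP, hE', S]
  -- h1 : (a+1)^2 * P - Q = (2a+2)(2a+1) * S a b c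
  have h1 : ((a:ℚ)+1)^2 * P - Q = (2*(a:ℚ)+2) * (2*(a:ℚ)+1) * S a b c := by
    rw [hP, hQ, Finset.mul_sum, ← Finset.sum_sub_distrib]
    have : ∀ k ∈ E, ((a:ℚ)+1)^2 * T (a+1) b c k - (k:ℚ)^2 * T (a+1) b c k
        = (2*(a:ℚ)+2) * (2*(a:ℚ)+1) * T a b c k := by
      intro k _
      have hab := absorb a k
      simp only [T]
      have ea : ((a+1:ℕ):ℤ) + k = (a:ℤ)+1+k := by push_cast; ring
      rw [ea]
      push_cast at hab ⊢
      linear_combination ((-1:ℚ)^k * ichoose (2*b) ((b:ℤ)+k) * ichoose (2*c) ((c:ℤ)+k)) * hab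
    rw [Finset.sum_congr rfl this, ← Finset.mul_sum]
    have : ∑ k ∈ E, T a b c k = S a b c := by
      rw [hE']; exact S_ext a b c (a+1) (by omega)
    rw [this]
  -- h2 : (a+1)*b*c*P + (a+1+b+c)*Q = 0
  have h2 : ((a:ℚ)+1)*(b:ℚ)*(c:ℚ) * P + ((a:ℚ)+1+(b:ℚ)+(c:ℚ)) * Q = 0 := by
    have hm := moment (a+1) b c (a+1) le_rfl
    rw [← hE'] at hm
    rw [hP, hQ, Finset.mul_sum, Finset.mul_sum, ← Finset.sum_add_distrib]
    rw [← hm]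
    apply Finset.sum_congr rfl
    intro k _
    push_cast
    ring
  rw [← hPS]
  linear_combination ((a:ℚ)+1+(b:ℚ)+(c:ℚ)) * h1 + h2

noncomputable def F (a b c : ℕ) : ℚ :=
  (((2 * a).factorial * (2 * b).factorial * (2 * c).factorial *
      (a + b + c).factorial : ℕ) : ℚ) /
    (((a + b).factorial * (a + c).factorial * (b + c).factorial *
      a.factorial * b.factorial * c.factorial : ℕ) : ℚ)

lemma fact_nz (n : ℕ) : ((n.factorial : ℚ)) ≠ 0 := by
  exact_mod_cast (Nat.factorial_pos n).ne'

lemma F_rec (a b c : ℕ) :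
    ((a:ℚ)+1) * ((a:ℚ)+(b:ℚ)+1) * ((a:ℚ)+(c:ℚ)+1) * F (a+1) b c
      = (2*(a:ℚ)+2) * (2*(a:ℚ)+1) * ((a:ℚ)+(b:ℚ)+(c:ℚ)+1) * F a b c := by
  unfold F
  have h1 : (2*(a+1)) = (2*a+1)+1 := by ring
  have h2 : (a+1+b) = (a+b)+1 := by ring
  have h3 : (a+1+c) = (a+c)+1 := by ring
  have h4 : (a+b+1+c) = (a+b+c)+1 := by ring
  rw [h1, h2, h3, h4, Nat.factorial_succ ((2*a+1)), Nat.factorial_succ (2*a),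
    Nat.factorial_succ (a+b), Nat.factorial_succ (a+c), Nat.factorial_succ (a+b+c),
    Nat.factorial_succ a]
  have n1 := fact_nz (2*a); have n2 := fact_nz (2*b); have n3 := fact_nz (2*c)
  have n4 := fact_nz (a+b+c); have n5 := fact_nz (a+b); have n6 := fact_nz (a+c)
  have n7 := fact_nz (b+c); have n8 := fact_nz a; have n9 := fact_nz b
  have n10 := fact_nz c
  push_cast
  field_simp
  ring

lemma S_base (b c : ℕ) : S 0 b c = F 0 b c := by
  rw [S]
  norm_num
  rw [T]
  norm_num
  have e0 : ichoose (2*0) ((0:ℕ):ℤ) = 1 := by norm_num [ichoose]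
  have eb : ichoose (2*b) ((b:ℕ):ℤ) = (((2*b).choose b : ℕ) : ℚ) := by
    rw [ichoose_nonneg _ (by positivity)]; norm_num
  have ec : ichoose (2*c) ((c:ℕ):ℤ) = (((2*c).choose c : ℕ) : ℚ) := by
    rw [ichoose_nonneg _ (by positivity)]; norm_num
  norm_num at e0
  rw [e0, eb, ec]
  unfold F
  rw [Nat.cast_choose ℚ (show b ≤ 2*b by omega), Nat.cast_choose ℚ (show c ≤ 2*c by omega)]
  have hb : 2*b - b = b := by omega
  have hc : 2*c - c = c := by omega
  rw [hb, hc]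
  have n1 := fact_nz (2*b); have n2 := fact_nz (2*c); have n3 := fact_nz (b+c)
  have n4 := fact_nz b; have n5 := fact_nz c
  push_cast
  field_simp
  ring

lemma S_eq_F (a b c : ℕ) : S a b c = F a b c := by
  induction a with
  | zero => exact S_base b c
  | succ a ih =>
    have hr := S_rec a b c
    have hf := F_rec a b c
    rw [ih] at hr
    have hnz : ((a:ℚ)+1) * ((a:ℚ)+(b:ℚ)+1) * ((a:ℚ)+(c:ℚ)+1) ≠ 0 := by positivity
    apply mul_left_cancel₀ hnz
    linear_combination hr - hf

/-- Dixon's summation theorem: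
`Υ₃(a₁,a₂,a₃) = Σ_{k ∈ ℤ} (−1)^k C(2a₁,a₁+k) C(2a₂,a₂+k) C(2a₃,a₃+k)
  = (2a₁)!(2a₂)!(2a₃)!(a₁+a₂+a₃)! / ((a₁+a₂)!(a₁+a₃)!(a₂+a₃)!·a₁!·a₂!·a₃!)`. -/
theorem stmt4 (a₁ a₂ a₃ : ℕ) :
    ups ![a₁, a₂, a₃] =
      (((2 * a₁).factorial * (2 * a₂).factorial * (2 * a₃).factorial *
          (a₁ + a₂ + a₃).factorial : ℕ) : ℚ) /
        (((a₁ + a₂).factorial * (a₁ + a₃).factorial * (a₂ + a₃).factorial *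
          a₁.factorial * a₂.factorial * a₃.factorial : ℕ) : ℚ) := by
  have hS : ups ![a₁, a₂, a₃] = S a₁ a₂ a₃ := by
    rw [ups, S]
    apply Finset.sum_congr
    · simp
    · intro k _
      rw [T, Fin.prod_univ_three]
      simp [Matrix.cons_val_zero, Matrix.cons_val_one, Matrix.head_cons, mul_assoc]
  rw [hS, S_eq_F]
  rfl
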